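/- Let n be a positive integer, p a prime, and u ∈ {1, …, n} such that u/gcd(u,n) = p^k with k > 0. Then the number of v ∈ {1, …, n}, v ≠ u, with gcd(u,v) ∣ n equals n − ⌊n/p^(v_p(n)+1)⌋. -/

import Mathlib

def diophDeg (n u : ℕ) : ℕ :=
  ((Finset.Icc 1 n).filter (fun v => v ≠ u ∧ Nat.gcd u v ∣ n)).card

theorem stmt_10 (n u p k : ℕ) (hn : 0 < n) (hp : p.Prime)
    (hu : u ∈ Finset.Icc 1 n) (hk : 0 < k)
    (hred : u / Nat.gcd u n = p ^ k) :
    diophDeg n u = n - n / p ^ (n.factorization p + 1) := by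
  obtain ⟨hu1, hun⟩ := Finset.mem_Icc.mp hu
  have hu0 : u ≠ 0 := by omega
  have hn0 : n ≠ 0 := hn.ne'
  set g := Nat.gcd u n with hg
  have hgu : g ∣ u := Nat.gcd_dvd_left u n
  have hgn : g ∣ n := Nat.gcd_dvd_right u n
  have hg0 : g ≠ 0 := Nat.gcd_ne_zero_left hu0
  have hueq : u = g * p ^ k := by
    rw [← hred, Nat.mul_div_cancel' hgu]
  have hng0 : n / g ≠ 0 := by
    have := Nat.div_pos (Nat.le_of_dvd hn hgn) (Nat.pos_of_ne_zero hg0)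
    omega
  have cop : Nat.Coprime (p ^ k) (n / g) := by
    rw [← hred]
    exact Nat.coprime_div_gcd_div_gcd (Nat.pos_of_ne_zero hg0)
  have hpd : ¬ p ∣ n / g := by
    intro h
    have hpg : p ∣ Nat.gcd (p ^ k) (n / g) :=
      Nat.dvd_gcd (dvd_pow_self p hk.ne') h
    rw [cop] at hpg
    have h1 := Nat.le_of_dvd one_pos hpg
    have h2 := hp.two_le
    omega
  have hfng : (n / g).factorization p = 0 :=
    Nat.factorization_eq_zero_of_not_dvd hpd
  have hnfact : n.factorization p = g.factorization p := by
    have hmul : n = g * (n / g) := (Nat.mul_div_cancel' hgn).symm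
    have h := congrArg (fun f => f p) (Nat.factorization_mul hg0 hng0)
    rw [← hmul] at h
    simp [hfng] at h
    simpa using h
  have hufact : u.factorization p = n.factorization p + k := by
    rw [hueq, Nat.factorization_mul hg0 (pow_ne_zero k hp.pos.ne'),
      Nat.Prime.factorization_pow hp]
    simp [hnfact]
  have hPu : p ^ (n.factorization p + 1) ∣ u := by
    rw [Nat.Prime.pow_dvd_iff_le_factorization hp hu0, hufact]
    omega
  have hPn : ¬ p ^ (n.factorization p + 1) ∣ n :=
    Nat.pow_succ_factorization_not_dvd hn0 hp
  have hset : (Finset.Icc 1 n).filter (fun v => v ≠ u ∧ Nat.gcd u v ∣ n)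
      = (Finset.Icc 1 n).filter (fun v => ¬ p ^ (n.factorization p + 1) ∣ v) := by
    apply Finset.filter_congr
    intro v hv
    obtain ⟨hv1, hvn⟩ := Finset.mem_Icc.mp hv
    have hv0 : v ≠ 0 := by omega
    constructor
    · rintro ⟨hne, hdvd⟩ hPv
      exact hPn (dvd_trans (Nat.dvd_gcd hPu hPv) hdvd)
    · intro hPv
      refine ⟨fun h => hPv (h ▸ hPu), ?_⟩
      have hgcd0 : Nat.gcd u v ≠ 0 := Nat.gcd_ne_zero_left hu0
      rw [← Nat.factorization_le_iff_dvd hgcd0 hn0, Finsupp.le_def]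
      intro q
      by_cases hq : q = p
      · subst hq
        have h1 : (Nat.gcd u v).factorization q ≤ v.factorization q := by
          have := (Nat.factorization_le_iff_dvd hgcd0 hv0).mpr (Nat.gcd_dvd_right u v)
          exact Finsupp.le_def.mp this q
        have h2 : v.factorization q ≤ n.factorization q := by
          by_contra hlt
          exact hPv ((Nat.Prime.pow_dvd_iff_le_factorization hp hv0).mpr (by omega))
        omega
      · have h1 : (Nat.gcd u v).factorization q ≤ u.factorization q := by
          have := (Nat.factorization_le_iff_dvd hgcd0 hu0).mpr (Nat.gcd_dvd_left u v)
          exact Finsupp.le_def.mp this q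
        have h2 : u.factorization q = g.factorization q := by
          rw [hueq, Nat.factorization_mul hg0 (pow_ne_zero k hp.pos.ne'),
            Nat.Prime.factorization_pow hp]
          simp [Finsupp.single_apply, hq, Ne.symm hq]
        have h3 : g.factorization q ≤ n.factorization q := by
          have := (Nat.factorization_le_iff_dvd hg0 hn0).mpr hgn
          exact Finsupp.le_def.mp this q
        omega
  have hcard2 : ((Finset.Icc 1 n).filter
      (fun v => p ^ (n.factorization p + 1) ∣ v)).card = n / p ^ (n.factorization p + 1) := by
    have : Finset.Icc 1 n = Finset.Ioc 0 n := by
      rw [← Finset.Icc_add_one_left_eq_Ioc]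
      rfl
    rw [this]
    exact Nat.Ioc_filter_dvd_card_eq_div n _
  have hcardIcc : (Finset.Icc 1 n).card = n := by
    simp
  unfold diophDeg
  rw [hset]
  have := Finset.card_filter_add_card_filter_not
    (s := Finset.Icc 1 n) (p := fun v => p ^ (n.factorization p + 1) ∣ v)
  omega
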